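/- Let M be a finite Markov chain and σ a rail of M (a finite path of the acyclic reduction Ac(M)). Define the set of torrent generators Gen(M,σ) = { ρ ∈ FPaths(M) | ∃f: σ ⪯_f ρ and f(|σ|−1) = |ρ|−1 }. Then the torrent Torr(M,σ) equals the disjoint union of the cylinders Cyl(ρ) over ρ ∈ Gen(M,σ): Torr(M,σ) = ⨄_{ρ ∈ Gen(M,σ)} Cyl(ρ), and moreover the cylinders Cyl(ρ) for distinct ρ ∈ Gen(M,σ) are pairwise disjoint. -/

import Mathlib

open scoped ENNReal Classical
open MeasureTheory

namespace CE

variable {S : Type}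

/-- Positive-probability transition (edge of the underlying digraph). -/
def edge (P : S → S → ℝ≥0∞) (s t : S) : Prop := 0 < P s t

/-- Finite path of the Markov chain with transition function `P`, starting at `s`. -/
def IsFPath (P : S → S → ℝ≥0∞) (s : S) (σ : List S) : Prop :=
  σ.head? = some s ∧ σ.Chain' (edge P)

/-- Infinite path of the Markov chain with transition function `P`, starting at `s`. -/
def IsPath (P : S → S → ℝ≥0∞) (s : S) (ω : ℕ → S) : Prop :=
  ω 0 = s ∧ ∀ n, edge P (ω n) (ω (n + 1))

/-- Reachability in the underlying digraph. -/
def Reach (P : S → S → ℝ≥0∞) : S → S → Prop :=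
  Relation.ReflTransGen (edge P)

/-- Same strongly connected component. -/
def sccRel (P : S → S → ℝ≥0∞) (s t : S) : Prop :=
  Reach P s t ∧ Reach P t s

/-- `s` belongs to a nontrivial SCC (more than one state, or a self-loop). -/
def nontriv (P : S → S → ℝ≥0∞) (s : S) : Prop :=
  (∃ t, t ≠ s ∧ sccRel P s t) ∨ edge P s s

/-- Cylinder (cone) of a finite path. -/
def Cyl (ρ : List S) : Set (ℕ → S) := {ω | ∀ i : Fin ρ.length, ω i.1 = ρ.get i}

/-- Finite paths from `s` reaching `A` exactly at their last state. -/
def FReach (P : S → S → ℝ≥0∞) (s : S) (A : Set S) : Set (List S) :=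
  {σ | IsFPath P s σ ∧ (∃ h : σ ≠ [], σ.getLast h ∈ A) ∧ ∀ x ∈ σ.dropLast, x ∉ A}

/-- Infinite sequences that eventually visit `A`. -/
def ReachSet (A : Set S) : Set (ℕ → S) := {ω | ∃ i, ω i ∈ A}

/-- Product of transition probabilities along a finite path. -/
noncomputable def cylProb (P : S → S → ℝ≥0∞) (d : S) (ρ : List S) : ℝ≥0∞ :=
  ∏ i ∈ Finset.range (ρ.length - 1), P (ρ.getD i d) (ρ.getD (i + 1) d)

/-- `σ ⪯_f ω`: subsequence embedding satisfying freshness and inertia w.r.t. `r`. -/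
structure Embeds (r : S → S → Prop) (σ : List S) (ω : ℕ → S) (f : ℕ → ℕ) : Prop where
  mono : ∀ i j, i < j → j < σ.length → f i < f j
  agree : ∀ i : Fin σ.length, σ.get i = ω (f i.1)
  fresh : ∀ i < σ.length, ∀ j < f i, ¬ r (ω (f i)) (ω j)
  inertia : ∀ i, i + 1 < σ.length → ∀ j, f i < j → j < f (i + 1) → r (ω (f i)) (ω j)

/-- There is a path from `s` to `t` staying in the SCC of `s` until `t`. -/
def exitReach (P : S → S → ℝ≥0∞) (s t : S) : Prop :=
  ∃ l : List S, List.Chain (edge P) s (l ++ [t]) ∧ ∀ u ∈ s :: l, sccRel P s u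

/-- The SCC of `s` has no output states. -/
def noOut (P : S → S → ℝ≥0∞) (s : S) : Prop :=
  ∀ u t, sccRel P s u → edge P u t → sccRel P s t

/-- Edges of the acyclic reduction. -/
def AcEdge (P : S → S → ℝ≥0∞) (s t : S) : Prop :=
  (¬ nontriv P s ∧ edge P s t) ∨
  (nontriv P s ∧ ¬ sccRel P s t ∧ exitReach P s t) ∨
  (nontriv P s ∧ t = s ∧ noOut P s)

/-- States of the acyclic reduction: states outside nontrivial SCCs and input states. -/
def AcState (P : S → S → ℝ≥0∞) (s : S) : Prop :=
  ¬ nontriv P s ∨ ∃ t, ¬ sccRel P s t ∧ edge P t s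

/-- A rail: a finite path of the acyclic reduction starting at `s0`. -/
def IsRail (P : S → S → ℝ≥0∞) (s0 : S) (σ : List S) : Prop :=
  σ.head? = some s0 ∧ σ.Chain' (AcEdge P) ∧ ∀ x ∈ σ, AcState P x

/-- The torrent of a rail `σ`: infinite paths into which `σ` embeds. -/
def Torr (P : S → S → ℝ≥0∞) (r : S → S → Prop) (s0 : S) (σ : List S) : Set (ℕ → S) :=
  {ω | IsPath P s0 ω ∧ ∃ f, Embeds r σ ω f}

def toSeq (d : S) (ρ : List S) : ℕ → S := fun n => ρ.getD n d

/-- Torrent generators: finite paths `ρ` with an embedding of `σ` ending at the last state. -/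
def Gen (P : S → S → ℝ≥0∞) (r : S → S → Prop) (s0 : S) (σ : List S) : Set (List S) :=
  {ρ | IsFPath P s0 ρ ∧ ρ ≠ [] ∧ ∃ f, Embeds r σ (toSeq s0 ρ) f ∧
    (∀ i < σ.length, f i < ρ.length) ∧ f (σ.length - 1) = ρ.length - 1}

/-- Finite paths from `t` to `s` staying in the SCC of `t` except the final state `s`. -/
def ExitPaths (P : S → S → ℝ≥0∞) (t s : S) : Set (List S) :=
  {π | π.head? = some t ∧ (∃ h : π ≠ [], π.getLast h = s) ∧ π.Chain' (edge P) ∧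
    ∀ u ∈ π.dropLast, sccRel P t u}

/-- `M_ψ`: make absorbing all states of `A` and all states not reaching `A`. -/
noncomputable def absP (P : S → S → ℝ≥0∞) (A : Set S) : S → S → ℝ≥0∞ := fun s t =>
  if s ∈ A ∨ ¬ ∃ a ∈ A, Reach P s a then (if t = s then 1 else 0) else P s t

/-- Absorbing state. -/
def Absorbing (P : S → S → ℝ≥0∞) (s : S) : Prop :=
  P s s = 1 ∧ ∀ t, t ≠ s → P s t = 0

/-- Output states of the SCC of `k`. -/
def OutK (P : S → S → ℝ≥0∞) (k : S) : Set S :=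
  {t | ¬ sccRel P k t ∧ ∃ u, sccRel P k u ∧ edge P u t}

/-- The chain `M_K` of the SCC of `k`, with the output states made absorbing. -/
noncomputable def PK (P : S → S → ℝ≥0∞) (k : S) : S → S → ℝ≥0∞ := fun s t =>
  if sccRel P k s then P s t else (if t = s then 1 else 0)

/-- Absorbing state of the acyclic reduction: its only edge is a self-loop. -/
def AcAbsorbing (P : S → S → ℝ≥0∞) (s : S) : Prop :=
  AcEdge P s s ∧ ∀ t, AcEdge P s t → t = s


lemma embeds_congr {r : S → S → Prop} {σ : List S} {ω ω' : ℕ → S} {f : ℕ → ℕ} {N : ℕ}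
    (h : Embeds r σ ω f) (hN : ∀ i < σ.length, f i < N) (hag : ∀ k < N, ω k = ω' k) :
    Embeds r σ ω' f := by
  constructor
  · exact h.mono
  · intro i
    rw [h.agree i, hag _ (hN i.1 i.2)]
  · intro i hi j hj
    rw [← hag _ (hN i hi), ← hag _ (hj.trans (hN i hi))]
    exact h.fresh i hi j hj
  · intro i hi j h1 h2
    have hfi1 : f (i + 1) < N := hN _ hi
    have hfi : f i < N := h1.trans (h2.trans hfi1)
    rw [← hag _ hfi, ← hag _ (h2.trans hfi1)]
    exact h.inertia i hi j h1 h2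

lemma sccRel_refl (P : S → S → ℝ≥0∞) (s : S) : sccRel P s s :=
  ⟨Relation.ReflTransGen.refl, Relation.ReflTransGen.refl⟩

/-- the torrent of a rail is the disjoint union of the cones (within the
paths of `M`) of its generators, and cylinders of distinct generators are disjoint. -/
theorem torrent_eq_union_generators (P : S → S → ℝ≥0∞) (s0 : S) (σ : List S)
    (hσ : IsRail P s0 σ) :
    (Torr P (sccRel P) s0 σ =
      ⋃ ρ ∈ Gen P (sccRel P) s0 σ, {ω | IsPath P s0 ω ∧ ω ∈ Cyl ρ}) ∧
    (∀ ρ₁ ∈ Gen P (sccRel P) s0 σ, ∀ ρ₂ ∈ Gen P (sccRel P) s0 σ,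
      ρ₁ ≠ ρ₂ → Cyl ρ₁ ∩ Cyl ρ₂ = (∅ : Set (ℕ → S))) := by
  have hσne : σ ≠ [] := by
    intro h
    rw [h] at hσ
    simp [IsRail] at hσ
  have hn : 0 < σ.length := List.length_pos_iff.mpr hσne
  constructor
  · ext ω
    constructor
    · rintro ⟨hpath, f, hemb⟩
      set N := f (σ.length - 1) + 1 with hN
      have hmonole : ∀ i < σ.length, f i ≤ f (σ.length - 1) := by
        intro i hi
        rcases lt_or_ge i (σ.length - 1) with h | h
        · exact le_of_lt (hemb.mono i (σ.length - 1) h (by omega))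
        · have h' : i = σ.length - 1 := by omega
          rw [h']
      have hbd : ∀ i < σ.length, f i < N := fun i hi =>
        Nat.lt_succ_of_le (hmonole i hi)
      set ρ : List S := List.ofFn (fun i : Fin N => ω i) with hρ
      have hlen : ρ.length = N := List.length_ofFn
      have hget : ∀ (k : ℕ) (hk : k < ρ.length), ρ.get ⟨k, hk⟩ = ω k := by
        intro k hk
        simp only [hρ, List.get_eq_getElem, List.getElem_ofFn]
      have hρne : ρ ≠ [] := by
        intro h
        rw [h] at hlen
        simp at hlen
      have hag : ∀ k < N, ω k = toSeq s0 ρ k := by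
        intro k hk
        have hk' : k < ρ.length := by rw [hlen]; exact hk
        rw [toSeq, List.getD_eq_getElem?_getD, List.getElem?_eq_getElem hk']
        simp [← hget k hk']
      refine Set.mem_iUnion.mpr ⟨ρ, Set.mem_iUnion.mpr ⟨?_, hpath, ?_⟩⟩
      · refine ⟨⟨?_, ?_⟩, hρne, f, embeds_congr hemb hbd hag, ?_, ?_⟩
        · have h0 : (0 : ℕ) < ρ.length := by omega
          rw [List.head?_eq_getElem?, List.getElem?_eq_getElem h0]
          have := hget 0 h0
          simp only [List.get_eq_getElem] at this
          rw [this, hpath.1]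
        · show List.IsChain (edge P) ρ
          rw [List.isChain_iff_getElem]
          intro i hi
          have e1 := hget i (by omega)
          have e2 := hget (i + 1) hi
          simp only [List.get_eq_getElem] at e1 e2
          rw [e1, e2]
          exact hpath.2 i
        · intro i hi
          rw [hlen]
          exact hbd i hi
        · omega
      · intro i
        exact (hget i.1 i.2).symm
    · intro hω
      obtain ⟨ρ, hmem⟩ := Set.mem_iUnion.mp hω
      obtain ⟨hρ, hpath, hcyl⟩ := Set.mem_iUnion.mp hmem
      obtain ⟨hfp, hρne, f, hemb, hbd, hlast⟩ := hρ
      refine ⟨hpath, f, embeds_congr hemb hbd ?_⟩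
      intro k hk
      rw [toSeq, List.getD_eq_getElem?_getD, List.getElem?_eq_getElem hk]
      exact (hcyl ⟨k, hk⟩).symm
  · have key : ∀ ρ₁ ∈ Gen P (sccRel P) s0 σ, ∀ ρ₂ ∈ Gen P (sccRel P) s0 σ,
        ρ₁.length ≤ ρ₂.length → ρ₁ ≠ ρ₂ → Cyl ρ₁ ∩ Cyl ρ₂ = (∅ : Set (ℕ → S)) := by
      intro ρ₁ h₁ ρ₂ h₂ hle hne
      rw [Set.eq_empty_iff_forall_notMem]
      rintro ω ⟨hc1, hc2⟩
      obtain ⟨_, hρ₁ne, f₁, hemb₁, hbd₁, hlast₁⟩ := h₁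
      obtain ⟨_, hρ₂ne, f₂, hemb₂, hbd₂, hlast₂⟩ := h₂
      have hsame : ∀ (k : ℕ) (hk : k < ρ₁.length),
          ρ₁.get ⟨k, hk⟩ = ρ₂.get ⟨k, lt_of_lt_of_le hk hle⟩ := by
        intro k hk
        rw [← hc1 ⟨k, hk⟩, ← hc2 ⟨k, lt_of_lt_of_le hk hle⟩]
      rcases lt_or_eq_of_le hle with hlt | heq
      · -- ρ₁ strictly shorter
        have h1pos : 0 < ρ₁.length := List.length_pos_iff.mpr hρ₁ne
        have hf1 : f₁ (σ.length - 1) < ρ₁.length := hbd₁ _ (by omega)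
        have hf2lt : f₁ (σ.length - 1) < f₂ (σ.length - 1) := by omega
        have hf1' : f₁ (σ.length - 1) < ρ₂.length := by omega
        have hf2' : f₂ (σ.length - 1) < ρ₂.length := hbd₂ _ (by omega)
        have hval1 : toSeq s0 ρ₁ (f₁ (σ.length - 1)) = σ.get ⟨σ.length - 1, by omega⟩ :=
          (hemb₁.agree ⟨σ.length - 1, by omega⟩).symm
        have hval2 : toSeq s0 ρ₂ (f₂ (σ.length - 1)) = σ.get ⟨σ.length - 1, by omega⟩ :=
          (hemb₂.agree ⟨σ.length - 1, by omega⟩).symm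
        have hval3 : toSeq s0 ρ₂ (f₁ (σ.length - 1)) = σ.get ⟨σ.length - 1, by omega⟩ := by
          rw [toSeq, List.getD_eq_getElem?_getD, List.getElem?_eq_getElem hf1']
          have := hsame _ hf1
          rw [← hval1, toSeq, List.getD_eq_getElem?_getD, List.getElem?_eq_getElem hf1]
          simp only [List.get_eq_getElem] at this ⊢
          rw [← this]
        have := hemb₂.fresh (σ.length - 1) (by omega) (f₁ (σ.length - 1)) hf2lt
        rw [hval2, hval3] at this
        exact this (sccRel_refl P _)
      · -- equal lengths → equal lists
        exact hne (List.ext_get heq fun n h1 _ => hsame n h1)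
    intro ρ₁ h₁ ρ₂ h₂ hne
    rcases le_total ρ₁.length ρ₂.length with h | h
    · exact key ρ₁ h₁ ρ₂ h₂ h hne
    · rw [Set.inter_comm]
      exact key ρ₂ h₂ ρ₁ h₁ h hne.symm

end CE
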